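/- A monounary algebra A with connected components {K_i} is residually finite if and only if every connected component K_i is residually finite. -/

import Mathlib

def IsMonoHom {A B : Type*} (f : A → A) (g : B → B) (φ : A → B) : Prop :=
  ∀ a, φ (f a) = g (φ a)

def ResiduallyFinite {A : Type*} (f : A → A) : Prop :=
  ∀ x y : A, x ≠ y →
    ∃ (F : Type) (g : F → F) (φ : A → F),
      Finite F ∧ IsMonoHom f g φ ∧ φ x ≠ φ y

/-- The connectedness relation on a monounary algebra: the equivalence relation
generated by `u ~ f u`. -/
def connRel {A : Type*} (f : A → A) : A → A → Prop :=
  Relation.EqvGen (fun u v => f u = v)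

/-- The connected component of `a`. -/
def component {A : Type*} (f : A → A) (a : A) : Type _ :=
  {x : A // connRel f x a}

/-- The restriction of `f` to the connected component of `a`. -/
def componentMap {A : Type*} (f : A → A) (a : A) :
    component f a → component f a :=
  fun x => ⟨f x.val,
    Relation.EqvGen.trans _ _ _
      (Relation.EqvGen.symm _ _ (Relation.EqvGen.rel _ _ rfl)) x.2⟩

lemma connRel_f_iff {A : Type*} (f : A → A) (z a : A) :
    connRel f (f z) a ↔ connRel f z a := by
  constructor
  · intro h
    exact Relation.EqvGen.trans _ _ _ (Relation.EqvGen.rel _ _ rfl) h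
  · intro h
    exact Relation.EqvGen.trans _ _ _
      (Relation.EqvGen.symm _ _ (Relation.EqvGen.rel _ _ rfl)) h

theorem residually_finite_iff_components {A : Type*} (f : A → A) :
    ResiduallyFinite f ↔ ∀ a : A, ResiduallyFinite (componentMap f a) := by
  classical
  constructor
  · intro hRF a x y hxy
    obtain ⟨F, g, φ, hF, hhom, hne⟩ :=
      hRF x.val y.val (fun h => hxy (Subtype.ext h))
    exact ⟨F, g, fun z => φ z.val, hF, fun z => hhom z.val, hne⟩
  · intro hRF x y hxy
    by_cases hc : connRel f y x
    · have hx : connRel f x x := Relation.EqvGen.refl x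
      obtain ⟨F, g, φ, hF, hhom, hne⟩ :=
        hRF x ⟨x, hx⟩ ⟨y, hc⟩ (fun h => hxy (congrArg Subtype.val h))
      haveI := hF
      haveI := Fintype.ofFinite F
      refine ⟨Option F, Option.map g,
        fun z => if h : connRel f z x then some (φ ⟨z, h⟩) else none,
        inferInstance, ?_, ?_⟩
      · intro z
        by_cases h : connRel f z x
        · have h' : connRel f (f z) x := (connRel_f_iff f z x).mpr h
          simp only [dif_pos h, dif_pos h']
          have := hhom ⟨z, h⟩
          simp only [Option.map_some]
          exact congrArg some this
        · have h' : ¬ connRel f (f z) x := fun hh => h ((connRel_f_iff f z x).mp hh)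
          simp [dif_pos, dif_neg h, dif_neg h']
      · simp only [dif_pos hx, dif_pos hc]
        intro h
        exact hne (Option.some_injective _ h)
    · refine ⟨Bool, id, fun z => decide (connRel f z x), inferInstance, ?_, ?_⟩
      · intro z
        simp only [id]
        congr 1
        exact propext (connRel_f_iff f z x)
      · simp [Relation.EqvGen.refl x, hc, connRel]
        exact decide_eq_false hc
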